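/- Let n ≥ 1 and δ > 1. For any nonnegative locally integrable function w on ℝⁿ with Mw(x) < ∞ for almost every x, the function (Mw)^{1/δ} belongs to A₁, with A₁ constant bounded by a constant depending only on n and δ (independent of w). -/

import Mathlib

open MeasureTheory Metric NNReal ENNReal

/-- The average `⨍_B w` of `w` over the ball `B(x,r)`. -/
noncomputable def ballAvg {n : ℕ} (w : EuclideanSpace ℝ (Fin n) → ℝ≥0∞)
    (x : EuclideanSpace ℝ (Fin n)) (r : ℝ) : ℝ≥0∞ :=
  (volume (ball x r))⁻¹ * ∫⁻ y in ball x r, w y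

/-- The Hardy–Littlewood maximal function: `Mw(x) = sup_{B ∋ x} ⨍_B w`. -/
noncomputable def hlMax {n : ℕ} (w : EuclideanSpace ℝ (Fin n) → ℝ≥0∞)
    (x : EuclideanSpace ℝ (Fin n)) : ℝ≥0∞ :=
  ⨆ (c : EuclideanSpace ℝ (Fin n)) (r : ℝ) (_ : 0 < r) (_ : x ∈ ball c r),
    ballAvg w c r

namespace CR

variable {n : ℕ}

local notation "E" => EuclideanSpace ℝ (Fin n)

lemma vol_ball_pos (x : E) {r : ℝ} (hr : 0 < r) : 0 < volume (ball x r) :=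
  measure_ball_pos volume x hr

lemma vol_ball_ne_top (x : E) (r : ℝ) : volume (ball x r) ≠ ⊤ :=
  measure_ball_lt_top.ne

lemma finrank_eq : Module.finrank ℝ (EuclideanSpace ℝ (Fin n)) = n := by
  simp [finrank_euclideanSpace]

lemma vol_ball_scale (c x : E) {k r : ℝ} (hk : 0 < k) (hr : 0 < r) :
    volume (ball c (k * r)) = ENNReal.ofReal (k ^ n) * volume (ball x r) := by
  rw [Measure.addHaar_ball_mul_of_pos volume c hk, finrank_eq,
    Measure.addHaar_ball_center volume x]

lemma vol_closedBall_scale (c x : E) {k r : ℝ} (hk : 0 < k) (hr : 0 < r) :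
    volume (closedBall c (k * r)) = ENNReal.ofReal (k ^ n) * volume (ball x r) := by
  rw [Measure.addHaar_closedBall volume c (by positivity), Measure.addHaar_ball_of_pos volume x hr,
    finrank_eq, mul_pow, ENNReal.ofReal_mul (by positivity), mul_assoc]

lemma ballAvg_le_hlMax (w : E → ℝ≥0∞) {x c : E} {r : ℝ} (hr : 0 < r) (hx : x ∈ ball c r) :
    ballAvg w c r ≤ hlMax w x := by
  refine le_trans ?_ (le_iSup _ c)
  refine le_trans ?_ (le_iSup _ r)
  refine le_trans ?_ (le_iSup _ hr)
  exact le_iSup (fun _ : x ∈ ball c r => ballAvg w c r) hx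

lemma self_le_hlMax_of_avg (w : E → ℝ≥0∞) (x : E) {s : ℝ} (hs : 0 < s) :
    ballAvg w x s ≤ hlMax w x :=
  ballAvg_le_hlMax w hs (mem_ball_self hs)

lemma isOpen_superlevel (w : E → ℝ≥0∞) (l : ℝ≥0∞) :
    IsOpen {x : E | l < hlMax w x} := by
  have : {x : E | l < hlMax w x} =
      ⋃ (c : E) (r : ℝ) (_ : 0 < r) (_ : l < ballAvg w c r), ball c r := by
    ext x
    simp only [Set.mem_setOf_eq, Set.mem_iUnion, hlMax, lt_iSup_iff]
    constructor
    · rintro ⟨c, r, hr, hx, hl⟩; exact ⟨c, r, hr, hl, hx⟩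
    · rintro ⟨c, r, hr, hl, hx⟩; exact ⟨c, r, hr, hx, hl⟩
  rw [this]
  exact isOpen_iUnion fun c => isOpen_iUnion fun r => isOpen_iUnion fun _ =>
    isOpen_iUnion fun _ => isOpen_ball

lemma measurable_hlMax (w : E → ℝ≥0∞) : Measurable (hlMax w) :=
  measurable_of_Ioi fun l => (isOpen_superlevel w l).measurableSet

lemma hlMax_mono {w w' : E → ℝ≥0∞} (h : ∀ y, w y ≤ w' y) (x : E) :
    hlMax w x ≤ hlMax w' x := by
  refine iSup_le fun c => iSup_le fun r => iSup_le fun hr => iSup_le fun hx => ?_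
  refine le_trans ?_ (ballAvg_le_hlMax w' hr hx)
  exact mul_le_mul_right (lintegral_mono h) _

/-- Splitting the average over a measurable set. -/
lemma ballAvg_split (w : E → ℝ≥0∞) {s : Set E} (hs : MeasurableSet s) (c : E) (r : ℝ) :
    ballAvg w c r = ballAvg (s.indicator w) c r + ballAvg (sᶜ.indicator w) c r := by
  unfold ballAvg
  rw [← mul_add]
  congr 1
  rw [lintegral_indicator hs, lintegral_indicator hs.compl, lintegral_add_compl w hs]

lemma hlMax_split (w : E → ℝ≥0∞) {s : Set E} (hs : MeasurableSet s) (x : E) :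
    hlMax w x ≤ hlMax (s.indicator w) x + hlMax (sᶜ.indicator w) x := by
  refine iSup_le fun c => iSup_le fun r => iSup_le fun hr => iSup_le fun hx => ?_
  rw [ballAvg_split w hs c r]
  exact add_le_add (ballAvg_le_hlMax _ hr hx) (ballAvg_le_hlMax _ hr hx)

lemma exists_ball_of_lt_hlMax {w : E → ℝ≥0∞} {x : E} {l : ℝ≥0∞} (h : l < hlMax w x) :
    ∃ c r, 0 < r ∧ x ∈ ball c r ∧ l < ballAvg w c r := by
  unfold hlMax at h
  rw [lt_iSup_iff] at h; obtain ⟨c, h⟩ := h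
  rw [lt_iSup_iff] at h; obtain ⟨r, h⟩ := h
  rw [lt_iSup_iff] at h; obtain ⟨hr, h⟩ := h
  rw [lt_iSup_iff] at h; obtain ⟨hx, h⟩ := h
  exact ⟨c, r, hr, hx, h⟩

lemma lmul_vol_le_lintegral {w : E → ℝ≥0∞} {c : E} {r : ℝ} (hr : 0 < r) {l : ℝ≥0∞}
    (h : l ≤ ballAvg w c r) : l * volume (ball c r) ≤ ∫⁻ y in ball c r, w y := by
  have h0 : volume (ball c r) ≠ 0 := (measure_ball_pos volume c hr).ne'
  have htop : volume (ball c r) ≠ ⊤ := measure_ball_lt_top.ne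
  calc l * volume (ball c r) ≤ ballAvg w c r * volume (ball c r) := mul_le_mul_left h _
    _ = ∫⁻ y in ball c r, w y := by
        rw [ballAvg, mul_comm, ← mul_assoc, ENNReal.mul_inv_cancel h0 htop, one_mul]

set_option maxHeartbeats 1000000 in
lemma weak11 (hn : 1 ≤ n) (u : E → ℝ≥0∞) (l : ℝ≥0∞) :
    l * volume {x : E | l < hlMax u x} ≤ ENNReal.ofReal (4 ^ n) * ∫⁻ y, u y := by
  have h4 : (0:ℝ) < 4 ^ n := by positivity
  set I := ∫⁻ y, u y with hI
  rcases eq_top_or_lt_top I with hItop | hIlt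
  · rw [hItop, ENNReal.mul_top (by simpa using h4.ne')]; exact le_top
  rcases eq_or_ne l 0 with rfl | hl0
  · simp
  rcases eq_or_ne l ⊤ with rfl | hltop
  · have he : {x : E | (⊤:ℝ≥0∞) < hlMax u x} = ∅ := by
      ext x; simp [not_top_lt]
    simp [he]
  set S := {x : E | l < hlMax u x} with hS
  have hchoice : ∀ x : S, ∃ c : E, ∃ r : ℝ, 0 < r ∧ (x:E) ∈ ball c r ∧ l < ballAvg u c r :=
    fun x => exists_ball_of_lt_hlMax x.2
  choose c r hr hx hl using hchoice
  have key : ∀ i : S, l * volume (ball (c i) (r i)) ≤ ∫⁻ y in ball (c i) (r i), u y :=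
    fun i => lmul_vol_le_lintegral (hr i) (hl i).le
  -- radius bound
  set v1 := volume (ball (0:E) 1) with hv1
  have hv10 : v1 ≠ 0 := (measure_ball_pos volume _ one_pos).ne'
  have hv1top : v1 ≠ ⊤ := measure_ball_lt_top.ne
  set X := l⁻¹ * I * v1⁻¹ with hX
  have hXtop : X ≠ ⊤ :=
    ENNReal.mul_ne_top (ENNReal.mul_ne_top (ENNReal.inv_ne_top.2 hl0) hIlt.ne)
      (ENNReal.inv_ne_top.2 hv10)
  have hrR : ∀ i : S, r i ≤ max 1 X.toReal := by
    intro i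
    have hvol : volume (ball (c i) (r i)) ≤ l⁻¹ * I := by
      have h1 : l * volume (ball (c i) (r i)) ≤ I :=
        (key i).trans (setLIntegral_le_lintegral _ _)
      calc volume (ball (c i) (r i))
          = l⁻¹ * (l * volume (ball (c i) (r i))) := by
            rw [← mul_assoc, ENNReal.inv_mul_cancel hl0 hltop, one_mul]
        _ ≤ l⁻¹ * I := mul_le_mul_right h1 _
    have hballeq : volume (ball (c i) (r i)) = ENNReal.ofReal (r i ^ n) * v1 := by
      rw [Measure.addHaar_ball_of_pos volume _ (hr i), finrank_eq]
    have hof : ENNReal.ofReal (r i ^ n) ≤ X := by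
      calc ENNReal.ofReal (r i ^ n)
          = ENNReal.ofReal (r i ^ n) * v1 * v1⁻¹ := by
            rw [mul_assoc, ENNReal.mul_inv_cancel hv10 hv1top, mul_one]
        _ ≤ l⁻¹ * I * v1⁻¹ := mul_le_mul_left (hballeq ▸ hvol) _
    have hrn : r i ^ n ≤ X.toReal := by
      rw [← ENNReal.ofReal_le_iff_le_toReal hXtop]; exact hof
    by_contra hcon
    push_neg at hcon
    have h1 : (1:ℝ) < r i := lt_of_le_of_lt (le_max_left _ _) hcon
    have : r i ≤ r i ^ n := by
      calc r i = r i ^ 1 := (pow_one _).symm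
      _ ≤ r i ^ n := pow_le_pow_right₀ h1.le hn
    nlinarith [lt_of_le_of_lt (le_max_right 1 X.toReal) hcon]
  obtain ⟨U, -, hUdisj, hUcover⟩ :=
    Vitali.exists_disjoint_subfamily_covering_enlargement_closedBall (Set.univ : Set S) c r
      (max 1 X.toReal) (fun i _ => hrR i) 4 (by norm_num)
  have hUc : U.Countable := by
    refine hUdisj.countable_of_nonempty_interior fun i _ => ?_
    rw [interior_closedBall _ (hr i).ne']
    exact nonempty_ball.mpr (hr i)
  have hcover : S ⊆ ⋃ b ∈ U, closedBall (c b) (4 * r b) := by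
    intro x hxS
    obtain ⟨b, hb, hsub⟩ := hUcover ⟨x, hxS⟩ (Set.mem_univ _)
    exact Set.mem_biUnion hb (hsub (ball_subset_closedBall (hx ⟨x, hxS⟩)))
  have hballdisj : U.PairwiseDisjoint fun i => ball (c i) (r i) :=
    hUdisj.mono fun i => ball_subset_closedBall
  haveI := hUc.toEncodable
  have step1 : volume S ≤ ∑' b : U, volume (closedBall (c b) (4 * r b)) :=
    (measure_mono hcover).trans (measure_biUnion_le volume hUc _)
  have step2 : ∀ b : U, volume (closedBall (c b) (4 * r b))
      = ENNReal.ofReal (4 ^ n) * volume (ball (c b) (r b)) :=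
    fun b => vol_closedBall_scale (c b) (c b) (by norm_num) (hr b)
  have step3 : ∑' b : U, l * volume (ball (c b) (r b))
      ≤ ∫⁻ y in ⋃ b ∈ U, ball (c b) (r b), u y := by
    rw [lintegral_biUnion hUc (fun b _ => measurableSet_ball) hballdisj]
    exact ENNReal.tsum_le_tsum fun b => key b.1
  have step4 : (∫⁻ y in ⋃ b ∈ U, ball (c b) (r b), u y) ≤ I := setLIntegral_le_lintegral _ _
  calc l * volume S ≤ l * ∑' b : U, volume (closedBall (c b) (4 * r b)) :=
    mul_le_mul_right step1 l
    _ = ENNReal.ofReal (4 ^ n) * ∑' b : U, l * volume (ball (c b) (r b)) := by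
      rw [tsum_congr step2, ENNReal.tsum_mul_left, ENNReal.tsum_mul_left, ← mul_assoc,
        ← mul_assoc, mul_comm l (ENNReal.ofReal (4 ^ n))]
    _ ≤ ENNReal.ofReal (4 ^ n) * I := mul_le_mul_right (step3.trans step4) _


lemma pointwise_dyadic {ε : ℝ} (hε0 : 0 < ε) {a : ℝ≥0∞} (ha0 : a ≠ 0) (hatop : a ≠ ⊤)
    (b : ℝ≥0∞) :
    b ^ ε ≤ a ^ ε + ∑' k : ℕ,
      (if (2:ℝ≥0∞) ^ k * a < b then ((2:ℝ≥0∞) ^ (k+1) * a) ^ ε else 0) := by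
  have haε : a ^ ε ≠ 0 := by
    simp [ENNReal.rpow_eq_zero_iff, ha0, hatop, hε0.not_gt, hε0]
  by_cases hb : b ≤ a
  · exact le_add_right (ENNReal.rpow_le_rpow hb hε0.le)
  push_neg at hb
  have hle : ∀ k : ℕ, a ^ ε ≤ ((2:ℝ≥0∞) ^ (k+1) * a) ^ ε := fun k =>
    ENNReal.rpow_le_rpow (le_mul_of_one_le_left zero_le (one_le_pow_of_one_le' one_le_two _))
      hε0.le
  rcases eq_or_ne b ⊤ with rfl | hbtop
  · have hcond : ∀ k : ℕ, (2:ℝ≥0∞) ^ k * a < ⊤ :=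
      fun k => (ENNReal.mul_ne_top (ENNReal.pow_ne_top ENNReal.ofNat_ne_top) hatop).lt_top
    have hrw : (∑' k : ℕ, (if (2:ℝ≥0∞) ^ k * a < ⊤ then ((2:ℝ≥0∞) ^ (k+1) * a) ^ ε else 0))
        = ∑' k : ℕ, ((2:ℝ≥0∞) ^ (k+1) * a) ^ ε := tsum_congr fun k => if_pos (hcond k)
    have htop : (∑' k : ℕ, ((2:ℝ≥0∞) ^ (k+1) * a) ^ ε) = ⊤ := by
      refine eq_top_iff.2 ?_
      calc (⊤:ℝ≥0∞) = ∑' _ : ℕ, a ^ ε := (ENNReal.tsum_const_eq_top_of_ne_zero haε).symm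
        _ ≤ _ := ENNReal.tsum_le_tsum hle
    rw [hrw, htop]
    simp
  · have hex : ∃ k : ℕ, b ≤ (2:ℝ≥0∞) ^ (k+1) * a := by
      have hdiv : b / a ≠ ⊤ := (ENNReal.div_lt_top hbtop ha0).ne
      obtain ⟨m, hm⟩ := ENNReal.exists_nat_gt hdiv
      refine ⟨m, ?_⟩
      have h1 : b ≤ (m:ℝ≥0∞) * a := by
        rw [ENNReal.div_lt_iff (Or.inl ha0) (Or.inl hatop)] at hm
        exact hm.le
      have h2 : (m:ℝ≥0∞) ≤ (2:ℝ≥0∞) ^ (m+1) := by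
        calc (m:ℝ≥0∞) ≤ (2:ℝ≥0∞) ^ m := by
              have := m.lt_two_pow_self.le
              exact_mod_cast Nat.cast_le.2 this
          _ ≤ (2:ℝ≥0∞) ^ (m+1) := pow_le_pow_right' one_le_two (Nat.le_succ m)
      exact h1.trans (mul_le_mul_left h2 a)
    set m := Nat.find hex with hmdef
    have hm1 : b ≤ (2:ℝ≥0∞) ^ (m+1) * a := Nat.find_spec hex
    have hm2 : (2:ℝ≥0∞) ^ m * a < b := by
      rcases Nat.eq_zero_or_pos m with h0 | hpos
      · rw [h0]; simpa using hb
      · have hmin := Nat.find_min hex (Nat.sub_lt hpos one_pos)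
        push_neg at hmin
        rw [← hmdef] at hmin
        have hmm : m - 1 + 1 = m := by omega
        rwa [hmm] at hmin
    calc b ^ ε ≤ ((2:ℝ≥0∞) ^ (m+1) * a) ^ ε := ENNReal.rpow_le_rpow hm1 hε0.le
      _ ≤ ∑' k : ℕ, (if (2:ℝ≥0∞) ^ k * a < b then ((2:ℝ≥0∞) ^ (k+1) * a) ^ ε else 0) := by
          have hh : ((2:ℝ≥0∞) ^ (m+1) * a) ^ ε
              = (if (2:ℝ≥0∞) ^ m * a < b then ((2:ℝ≥0∞) ^ (m+1) * a) ^ ε else 0) :=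
            (if_pos hm2).symm
          rw [hh]
          exact ENNReal.le_tsum m
      _ ≤ _ := le_add_self

lemma two_rpow_lt_one {ε : ℝ} (hε1 : ε < 1) : (2:ℝ≥0∞) ^ (ε - 1) < 1 := by
  have : (1:ℝ≥0∞) < 2 := one_lt_two
  exact ENNReal.rpow_lt_one_of_one_lt_of_neg this (by linarith)

lemma tsum_tail_bound {ε : ℝ} (hε0 : 0 < ε) (hε1 : ε < 1) {a : ℝ≥0∞} (ha0 : a ≠ 0)
    (hatop : a ≠ ⊤) (J : ℝ≥0∞) :
    (∑' k : ℕ, ((2:ℝ≥0∞) ^ (k+1) * a) ^ ε * (((2:ℝ≥0∞) ^ k * a)⁻¹ * J))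
      ≤ (2:ℝ≥0∞) ^ ε * (1 - (2:ℝ≥0∞) ^ (ε - 1))⁻¹ * (a ^ (ε - 1) * J) := by
  have h20 : (2:ℝ≥0∞) ≠ 0 := by norm_num
  have h2top : (2:ℝ≥0∞) ≠ ⊤ := ENNReal.ofNat_ne_top
  have hterm : ∀ k : ℕ, ((2:ℝ≥0∞) ^ (k+1) * a) ^ ε * (((2:ℝ≥0∞) ^ k * a)⁻¹ * J)
      = (2:ℝ≥0∞) ^ ε * ((2:ℝ≥0∞) ^ (ε - 1)) ^ k * (a ^ (ε - 1) * J) := by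
    intro k
    have e1 : ((2:ℝ≥0∞) ^ (k+1) * a) ^ ε = ((2:ℝ≥0∞) ^ (k+1) : ℝ≥0∞) ^ ε * a ^ ε :=
      ENNReal.mul_rpow_of_nonneg _ _ hε0.le
    have e2 : ((2:ℝ≥0∞) ^ k * a)⁻¹ = ((2:ℝ≥0∞) ^ k)⁻¹ * a⁻¹ :=
      ENNReal.mul_inv (Or.inr hatop) (Or.inl (ENNReal.pow_ne_top h2top))
    have e3 : ((2:ℝ≥0∞) ^ (k+1) : ℝ≥0∞) ^ ε = (2:ℝ≥0∞) ^ (((k:ℝ)+1) * ε) := by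
      rw [← ENNReal.rpow_natCast (2:ℝ≥0∞) (k+1), ← ENNReal.rpow_mul]
      push_cast
      ring_nf
    have e4 : ((2:ℝ≥0∞) ^ k)⁻¹ = (2:ℝ≥0∞) ^ (-(k:ℝ)) := by
      rw [← ENNReal.rpow_natCast (2:ℝ≥0∞) k, ENNReal.rpow_neg]
    have e5 : a ^ ε * a⁻¹ = a ^ (ε - 1) := by
      rw [← ENNReal.rpow_neg_one, ← ENNReal.rpow_add _ _ ha0 hatop]
      rw [sub_eq_add_neg]
    have e6 : ((2:ℝ≥0∞) ^ (ε - 1)) ^ k = (2:ℝ≥0∞) ^ ((ε - 1) * k) := by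
      rw [← ENNReal.rpow_natCast ((2:ℝ≥0∞) ^ (ε - 1)) k, ← ENNReal.rpow_mul]
    have e7 : (2:ℝ≥0∞) ^ (((k:ℝ)+1) * ε) * (2:ℝ≥0∞) ^ (-(k:ℝ))
        = (2:ℝ≥0∞) ^ ε * (2:ℝ≥0∞) ^ ((ε - 1) * k) := by
      rw [← ENNReal.rpow_add _ _ h20 h2top, ← ENNReal.rpow_add _ _ h20 h2top]
      ring_nf
    calc ((2:ℝ≥0∞) ^ (k+1) * a) ^ ε * (((2:ℝ≥0∞) ^ k * a)⁻¹ * J)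
        = ((2:ℝ≥0∞) ^ (((k:ℝ)+1) * ε) * (2:ℝ≥0∞) ^ (-(k:ℝ))) * (a ^ ε * a⁻¹) * J := by
          rw [e1, e2, e3, e4]; ring
      _ = (2:ℝ≥0∞) ^ ε * ((2:ℝ≥0∞) ^ (ε - 1)) ^ k * (a ^ (ε - 1) * J) := by
          rw [e5, e6, e7]; ring
  refine le_of_eq ?_
  calc (∑' k : ℕ, ((2:ℝ≥0∞) ^ (k+1) * a) ^ ε * (((2:ℝ≥0∞) ^ k * a)⁻¹ * J))
      = ∑' k : ℕ, (2:ℝ≥0∞) ^ ε * (a ^ (ε - 1) * J) * ((2:ℝ≥0∞) ^ (ε - 1)) ^ k := by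
        refine tsum_congr fun k => ?_
        rw [hterm k]; ring
    _ = (2:ℝ≥0∞) ^ ε * (a ^ (ε - 1) * J) * (1 - (2:ℝ≥0∞) ^ (ε - 1))⁻¹ := by
        rw [ENNReal.tsum_mul_left, ENNReal.tsum_geometric]
    _ = (2:ℝ≥0∞) ^ ε * (1 - (2:ℝ≥0∞) ^ (ε - 1))⁻¹ * (a ^ (ε - 1) * J) := by
        rw [mul_right_comm]


lemma kolmogorov (hn : 1 ≤ n) {ε : ℝ} (hε0 : 0 < ε) (hε1 : ε < 1) (u : E → ℝ≥0∞)
    (c : E) {ρ : ℝ} (hρ : 0 < ρ) :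
    ∫⁻ y in ball c ρ, (hlMax u y) ^ ε ≤
      (1 + ENNReal.ofReal (4 ^ n) * ((2:ℝ≥0∞) ^ ε * (1 - (2:ℝ≥0∞) ^ (ε - 1))⁻¹)) *
        ((∫⁻ y, u y) ^ ε * (volume (ball c ρ)) ^ (1 - ε)) := by
  set I := ∫⁻ y, u y with hIdef
  set V := volume (ball c ρ) with hVdef
  have hV0 : V ≠ 0 := (measure_ball_pos volume c hρ).ne'
  have hVtop : V ≠ ⊤ := measure_ball_lt_top.ne
  rcases eq_or_ne I 0 with hI0 | hI0
  · have hM : ∀ y : E, hlMax u y = 0 := by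
      intro y
      refine le_antisymm ?_ zero_le
      refine iSup_le fun c' => iSup_le fun r => iSup_le fun hr => iSup_le fun hx => ?_
      have hz : (∫⁻ z in ball c' r, u z) = 0 :=
        le_antisymm ((setLIntegral_le_lintegral _ _).trans hI0.le) zero_le
      simp [ballAvg, hz]
    have hMε : ∀ y : E, (hlMax u y) ^ ε = 0 := fun y => by
      rw [hM y]; exact ENNReal.zero_rpow_of_pos hε0
    simp only [hMε]
    simp
  rcases eq_or_ne I ⊤ with hItop | hItop
  · have h1 : V ^ (1 - ε) ≠ 0 := by
      simp [ENNReal.rpow_eq_zero_iff, hV0, hVtop]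
    have h2 : (1 : ℝ≥0∞) + ENNReal.ofReal (4 ^ n) * ((2:ℝ≥0∞) ^ ε * (1 - (2:ℝ≥0∞) ^ (ε - 1))⁻¹)
        ≠ 0 := by
      intro h
      have h3 : (1:ℝ≥0∞) ≤ 1 + ENNReal.ofReal (4 ^ n) *
          ((2:ℝ≥0∞) ^ ε * (1 - (2:ℝ≥0∞) ^ (ε - 1))⁻¹) := le_self_add
      rw [h] at h3
      simp at h3
    have hrhs : (1 + ENNReal.ofReal (4 ^ n) * ((2:ℝ≥0∞) ^ ε * (1 - (2:ℝ≥0∞) ^ (ε - 1))⁻¹)) *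
        (I ^ ε * V ^ (1 - ε)) = ⊤ := by
      rw [hItop, ENNReal.top_rpow_of_pos hε0, ENNReal.top_mul h1, ENNReal.mul_top h2]
    rw [hrhs]
    exact le_top
  -- main case
  set a := I * V⁻¹ with hadef
  have ha0 : a ≠ 0 := by
    rw [hadef]
    simp [hI0, ENNReal.inv_eq_zero, hVtop]
  have hatop : a ≠ ⊤ := ENNReal.mul_ne_top hItop (ENNReal.inv_ne_top.2 hV0)
  set S : ℕ → Set E := fun k => {y : E | (2:ℝ≥0∞) ^ k * a < hlMax u y} with hSdef
  have hSmeas : ∀ k, MeasurableSet (S k) := fun k => (isOpen_superlevel u _).measurableSet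
  have hka0 : ∀ k : ℕ, (2:ℝ≥0∞) ^ k * a ≠ 0 := fun k => by
    simp [pow_ne_zero, ha0]
  have hkatop : ∀ k : ℕ, (2:ℝ≥0∞) ^ k * a ≠ ⊤ := fun k =>
    ENNReal.mul_ne_top (ENNReal.pow_ne_top ENNReal.ofNat_ne_top) hatop
  have hvolS : ∀ k : ℕ, volume (S k) ≤ ((2:ℝ≥0∞) ^ k * a)⁻¹ * (ENNReal.ofReal (4 ^ n) * I) := by
    intro k
    have hw := weak11 hn u ((2:ℝ≥0∞) ^ k * a)
    calc volume (S k)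
        = ((2:ℝ≥0∞) ^ k * a)⁻¹ * (((2:ℝ≥0∞) ^ k * a) * volume (S k)) := by
          rw [← mul_assoc, ENNReal.inv_mul_cancel (hka0 k) (hkatop k), one_mul]
      _ ≤ _ := mul_le_mul_right hw _
  have hpt : ∀ y : E, (hlMax u y) ^ ε ≤
      a ^ ε + ∑' k : ℕ, (S k).indicator (fun _ => ((2:ℝ≥0∞) ^ (k+1) * a) ^ ε) y := by
    intro y
    refine (pointwise_dyadic hε0 ha0 hatop (hlMax u y)).trans (le_of_eq ?_)
    congr 1
    refine tsum_congr fun k => ?_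
    rw [Set.indicator_apply]
    simp only [hSdef, Set.mem_setOf_eq]
  have hVi_top : V⁻¹ ≠ ⊤ := ENNReal.inv_ne_top.2 hV0
  have e1 : a ^ ε * V = I ^ ε * V ^ (1 - ε) := by
    have ha : a ^ ε = I ^ ε * (V ^ ε)⁻¹ := by
      rw [hadef, ENNReal.mul_rpow_of_nonneg _ _ hε0.le, ENNReal.inv_rpow]
    have hVsplit : (V ^ ε)⁻¹ * V = V ^ (1 - ε) := by
      have h' : V ^ (1 - ε) = V ^ (-ε) * V ^ (1:ℝ) := by
        rw [← ENNReal.rpow_add _ _ hV0 hVtop]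
        congr 1
        ring
      rw [h', ENNReal.rpow_one, ENNReal.rpow_neg]
    rw [ha, mul_assoc, hVsplit]
  have e2 : a ^ (ε - 1) * I = I ^ ε * V ^ (1 - ε) := by
    have h1 : a ^ (ε - 1) = I ^ (ε - 1) * V ^ (1 - ε) := by
      rw [hadef, ENNReal.mul_rpow_of_ne_top hItop hVi_top, ENNReal.inv_rpow,
        ← ENNReal.rpow_neg]
      congr 1
      ring
    have hIh : I ^ (ε - 1) * I = I ^ ε := by
      nth_rewrite 2 [← ENNReal.rpow_one I]
      rw [← ENNReal.rpow_add _ _ hI0 hItop]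
      congr 1
      ring
    rw [h1, mul_right_comm, hIh]
  have e2' : (2:ℝ≥0∞) ^ ε * (1 - (2:ℝ≥0∞) ^ (ε - 1))⁻¹ *
      (a ^ (ε - 1) * (ENNReal.ofReal (4 ^ n) * I))
      = ENNReal.ofReal (4 ^ n) * ((2:ℝ≥0∞) ^ ε * (1 - (2:ℝ≥0∞) ^ (ε - 1))⁻¹) *
        (I ^ ε * V ^ (1 - ε)) := by
    calc (2:ℝ≥0∞) ^ ε * (1 - (2:ℝ≥0∞) ^ (ε - 1))⁻¹ *
        (a ^ (ε - 1) * (ENNReal.ofReal (4 ^ n) * I))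
        = ENNReal.ofReal (4 ^ n) * ((2:ℝ≥0∞) ^ ε * (1 - (2:ℝ≥0∞) ^ (ε - 1))⁻¹) *
          (a ^ (ε - 1) * I) := by ring
      _ = _ := by rw [e2]
  calc ∫⁻ y in ball c ρ, (hlMax u y) ^ ε
      ≤ ∫⁻ y in ball c ρ,
          (a ^ ε + ∑' k : ℕ, (S k).indicator (fun _ => ((2:ℝ≥0∞) ^ (k+1) * a) ^ ε) y) :=
        lintegral_mono hpt
    _ = a ^ ε * V +
        ∫⁻ y in ball c ρ, ∑' k : ℕ, (S k).indicator (fun _ => ((2:ℝ≥0∞) ^ (k+1) * a) ^ ε) y := by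
        rw [lintegral_add_left measurable_const, setLIntegral_const]
    _ ≤ a ^ ε * V + ∑' k : ℕ, ((2:ℝ≥0∞) ^ (k+1) * a) ^ ε *
          (((2:ℝ≥0∞) ^ k * a)⁻¹ * (ENNReal.ofReal (4 ^ n) * I)) := by
        refine add_le_add_right ?_ _
        rw [lintegral_tsum (fun k => (measurable_const.indicator (hSmeas k)).aemeasurable)]
        refine ENNReal.tsum_le_tsum fun k => ?_
        rw [lintegral_indicator (hSmeas k), setLIntegral_const,
          Measure.restrict_apply (hSmeas k)]
        exact mul_le_mul_right ((measure_mono Set.inter_subset_left).trans (hvolS k)) _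
    _ ≤ a ^ ε * V + (2:ℝ≥0∞) ^ ε * (1 - (2:ℝ≥0∞) ^ (ε - 1))⁻¹ *
          (a ^ (ε - 1) * (ENNReal.ofReal (4 ^ n) * I)) :=
        add_le_add_right (tsum_tail_bound hε0 hε1 ha0 hatop _) _
    _ = (1 + ENNReal.ofReal (4 ^ n) * ((2:ℝ≥0∞) ^ ε * (1 - (2:ℝ≥0∞) ^ (ε - 1))⁻¹)) *
        (I ^ ε * V ^ (1 - ε)) := by
        rw [e1, e2']
        ring

lemma far_bound (w : E → ℝ≥0∞) (c x : E) {ρ : ℝ} (hρ : 0 < ρ) (hx : x ∈ ball c ρ)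
    {y : E} (hy : y ∈ ball c ρ) :
    hlMax ((ball c (3*ρ))ᶜ.indicator w) y ≤ ENNReal.ofReal (4 ^ n) * hlMax w x := by
  refine iSup_le fun c' => iSup_le fun s => iSup_le fun hs => iSup_le fun hys => ?_
  by_cases hsub : ball c' s ⊆ ball c (3*ρ)
  · have hz : ∀ z ∈ ball c' s, (ball c (3*ρ))ᶜ.indicator w z = 0 := fun z hz =>
      Set.indicator_of_notMem (Set.notMem_compl_iff.mpr (hsub hz)) w
    have hint : (∫⁻ z in ball c' s, (ball c (3*ρ))ᶜ.indicator w z) = 0 := by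
      refine le_antisymm ?_ zero_le
      refine le_of_le_of_eq (setLIntegral_mono' measurableSet_ball
        (g := fun _ => 0) fun z hzz => (hz z hzz).le) ?_
      simp
    rw [ballAvg, hint, mul_zero]
    exact zero_le
  · obtain ⟨z, hz1, hz2⟩ := Set.not_subset.mp hsub
    have h1 : dist z c' < s := mem_ball.mp hz1
    have h2 : 3*ρ ≤ dist z c := not_lt.mp fun h => hz2 (mem_ball.mpr h)
    have h3 : dist y c' < s := mem_ball.mp hys
    have h4 : dist y c < ρ := mem_ball.mp hy
    have htri : dist z c ≤ dist z c' + dist c' y + dist y c := dist_triangle4 z c' y c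
    have hcy : dist c' y = dist y c' := dist_comm c' y
    have hρs : ρ ≤ s := by linarith [htri, hcy ▸ htri]
    have hsubset : ball c' s ⊆ ball x (4*s) := by
      intro u hu
      have h6 : dist u c' < s := mem_ball.mp hu
      have h7 : dist u x ≤ dist u c' + dist c' y + dist y x := dist_triangle4 u c' y x
      have h8 : dist y x ≤ dist y c + dist c x := dist_triangle y c x
      have h9 : dist c x < ρ := by rw [dist_comm]; exact mem_ball.mp hx
      rw [mem_ball]
      calc dist u x ≤ dist u c' + dist c' y + dist y x := h7
        _ < 4 * s := by rw [hcy]; linarith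
    have hV'0 : volume (ball c' s) ≠ 0 := (measure_ball_pos volume c' hs).ne'
    have hV'top : volume (ball c' s) ≠ ⊤ := measure_ball_lt_top.ne
    have hb40 : volume (ball x (4*s)) ≠ 0 := (measure_ball_pos volume x (by linarith)).ne'
    have hb4top : volume (ball x (4*s)) ≠ ⊤ := measure_ball_lt_top.ne
    have hvol4 : volume (ball x (4*s)) = ENNReal.ofReal (4 ^ n) * volume (ball c' s) :=
      vol_ball_scale x c' (by norm_num) hs
    calc ballAvg ((ball c (3*ρ))ᶜ.indicator w) c' s
        ≤ (volume (ball c' s))⁻¹ * ∫⁻ z in ball x (4*s), w z := by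
          refine mul_le_mul_right ?_ _
          refine le_trans (lintegral_mono fun z => Set.indicator_le_self _ w z) ?_
          exact lintegral_mono_set hsubset
      _ = (volume (ball c' s))⁻¹ * (volume (ball x (4*s)) * ballAvg w x (4*s)) := by
          have hh : volume (ball x (4*s)) * ballAvg w x (4*s) = ∫⁻ z in ball x (4*s), w z := by
            rw [ballAvg, ← mul_assoc, ENNReal.mul_inv_cancel hb40 hb4top, one_mul]
          rw [hh]
      _ = ENNReal.ofReal (4 ^ n) * ballAvg w x (4*s) := by
          rw [hvol4, mul_comm (ENNReal.ofReal (4 ^ n)) (volume (ball c' s)), mul_assoc,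
            ← mul_assoc (volume (ball c' s))⁻¹, ENNReal.inv_mul_cancel hV'0 hV'top, one_mul]
      _ ≤ ENNReal.ofReal (4 ^ n) * hlMax w x :=
          mul_le_mul_right (self_le_hlMax_of_avg w x (by linarith)) _

end CR

/-- Coifman–Rochberg: for `δ > 1` there is a constant `c` (depending only on `n` and `δ`)
such that for every nonnegative locally integrable `w` with `Mw < ∞` a.e., the function
`(Mw)^{1/δ}` is an `A₁` weight with constant at most `c`:
`M((Mw)^{1/δ}) ≤ c·(Mw)^{1/δ}` a.e. -/
theorem coifman_rochberg (n : ℕ) (hn : 1 ≤ n) (δ : ℝ) (hδ : 1 < δ) :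
    ∃ c : ℝ≥0, ∀ w : EuclideanSpace ℝ (Fin n) → ℝ, (∀ x, 0 ≤ w x) →
      LocallyIntegrable w volume →
      (∀ᵐ x : EuclideanSpace ℝ (Fin n), hlMax (fun y => ENNReal.ofReal (w y)) x < ⊤) →
      ∀ᵐ x : EuclideanSpace ℝ (Fin n),
        hlMax (fun y => (hlMax (fun z => ENNReal.ofReal (w z)) y) ^ (1 / δ)) x ≤
          c * (hlMax (fun y => ENNReal.ofReal (w y)) x) ^ (1 / δ) := by
  have hδ0 : (0:ℝ) < δ := lt_trans one_pos hδ
  set ε : ℝ := 1 / δ with hεdef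
  have hε0 : 0 < ε := by rw [hεdef]; positivity
  have hε1 : ε < 1 := by rw [hεdef, div_lt_one hδ0]; exact hδ
  set K : ℝ≥0∞ := 1 + ENNReal.ofReal (4 ^ n) *
    ((2:ℝ≥0∞) ^ ε * (1 - (2:ℝ≥0∞) ^ (ε - 1))⁻¹) with hKdef
  have hKtop : K ≠ ⊤ := by
    rw [hKdef]
    have h2lt : (2:ℝ≥0∞) ^ (ε - 1) < 1 := CR.two_rpow_lt_one hε1
    have hsub : (1:ℝ≥0∞) - (2:ℝ≥0∞) ^ (ε - 1) ≠ 0 := by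
      simp [tsub_eq_zero_iff_le, not_le, h2lt]
    refine ENNReal.add_ne_top.mpr ⟨ENNReal.one_ne_top, ?_⟩
    refine ENNReal.mul_ne_top ENNReal.ofReal_ne_top (ENNReal.mul_ne_top ?_
      (ENNReal.inv_ne_top.mpr hsub))
    exact ENNReal.rpow_ne_top_of_nonneg hε0.le ENNReal.ofNat_ne_top
  set Ctot : ℝ≥0∞ := K * ENNReal.ofReal (3 ^ n) ^ ε + ENNReal.ofReal (4 ^ n) ^ ε with hCdef
  have hCtop : Ctot ≠ ⊤ := by
    rw [hCdef]
    exact ENNReal.add_ne_top.mpr ⟨ENNReal.mul_ne_top hKtop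
      (ENNReal.rpow_ne_top_of_nonneg hε0.le ENNReal.ofReal_ne_top),
      ENNReal.rpow_ne_top_of_nonneg hε0.le ENNReal.ofReal_ne_top⟩
  refine ⟨Ctot.toNNReal, ?_⟩
  intro w hw hloc hfin
  set W : EuclideanSpace ℝ (Fin n) → ℝ≥0∞ := fun z => ENNReal.ofReal (w z) with hWdef
  refine Filter.Eventually.of_forall fun x => ?_
  have hC : (Ctot.toNNReal : ℝ≥0∞) = Ctot := ENNReal.coe_toNNReal hCtop
  rw [hC]
  refine iSup_le fun cc => iSup_le fun ρ => iSup_le fun hρ => iSup_le fun hx => ?_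
  set V := volume (ball cc ρ) with hVdef
  have hV0 : V ≠ 0 := (measure_ball_pos volume cc hρ).ne'
  have hVtop : V ≠ ⊤ := measure_ball_lt_top.ne
  set W1 := (ball cc (3*ρ)).indicator W with hW1def
  set W2 := (ball cc (3*ρ))ᶜ.indicator W with hW2def
  have hsplitpt : ∀ y, (hlMax W y) ^ ε ≤ (hlMax W1 y) ^ ε + (hlMax W2 y) ^ ε := fun y =>
    (ENNReal.rpow_le_rpow (CR.hlMax_split W measurableSet_ball y) hε0.le).trans
      (ENNReal.rpow_add_le_add_rpow _ _ hε0.le hε1.le)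
  set I1 := ∫⁻ z, W1 z with hI1def
  have hI1 : I1 = ∫⁻ z in ball cc (3*ρ), W z := by
    rw [hI1def, hW1def, lintegral_indicator measurableSet_ball]
  have hterm1 : V⁻¹ * ∫⁻ y in ball cc ρ, (hlMax W1 y) ^ ε
      ≤ K * ENNReal.ofReal (3 ^ n) ^ ε * (hlMax W x) ^ ε := by
    have hkol := CR.kolmogorov (n := n) hn hε0 hε1 W1 cc hρ
    have hVe : V ^ (1 - ε) * V⁻¹ = (V ^ ε)⁻¹ := by
      rw [← ENNReal.rpow_neg_one V, ← ENNReal.rpow_add _ _ hV0 hVtop, ← ENNReal.rpow_neg]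
      congr 1
      ring
    have havg : I1 * V⁻¹ ≤ ENNReal.ofReal (3 ^ n) * hlMax W x := by
      have hx3 : x ∈ ball cc (3*ρ) :=
        mem_ball.mpr (lt_of_lt_of_le (mem_ball.mp hx) (by linarith))
      have hV3 : volume (ball cc (3*ρ)) = ENNReal.ofReal (3 ^ n) * V :=
        CR.vol_ball_scale cc cc (by norm_num) hρ
      have h30 : ENNReal.ofReal ((3:ℝ) ^ n) ≠ 0 := by
        simpa [ENNReal.ofReal_eq_zero, not_le] using (by positivity : (0:ℝ) < 3 ^ n)
      have hVinv : V⁻¹ = ENNReal.ofReal (3 ^ n) * (volume (ball cc (3*ρ)))⁻¹ := by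
        rw [hV3, ENNReal.mul_inv (Or.inl h30) (Or.inl ENNReal.ofReal_ne_top), ← mul_assoc,
          ENNReal.mul_inv_cancel h30 ENNReal.ofReal_ne_top, one_mul]
      calc I1 * V⁻¹ = ENNReal.ofReal (3 ^ n) * ((volume (ball cc (3*ρ)))⁻¹ * I1) := by
            rw [hVinv]; ring
        _ ≤ ENNReal.ofReal (3 ^ n) * hlMax W x := by
            refine mul_le_mul_right ?_ _
            rw [hI1]
            exact CR.ballAvg_le_hlMax W (by linarith) hx3
    calc V⁻¹ * ∫⁻ y in ball cc ρ, (hlMax W1 y) ^ ε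
        ≤ V⁻¹ * (K * (I1 ^ ε * V ^ (1 - ε))) := mul_le_mul_right hkol _
      _ = K * (I1 ^ ε * (V ^ (1 - ε) * V⁻¹)) := by ring
      _ = K * (I1 * V⁻¹) ^ ε := by
          rw [hVe, ENNReal.mul_rpow_of_nonneg _ _ hε0.le, ENNReal.inv_rpow]
      _ ≤ K * (ENNReal.ofReal (3 ^ n) * hlMax W x) ^ ε :=
          mul_le_mul_right (ENNReal.rpow_le_rpow havg hε0.le) _
      _ = K * ENNReal.ofReal (3 ^ n) ^ ε * (hlMax W x) ^ ε := by
          rw [ENNReal.mul_rpow_of_nonneg _ _ hε0.le, mul_assoc]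
  have hterm2 : V⁻¹ * ∫⁻ y in ball cc ρ, (hlMax W2 y) ^ ε
      ≤ ENNReal.ofReal (4 ^ n) ^ ε * (hlMax W x) ^ ε := by
    have hb : ∀ y ∈ ball cc ρ, (hlMax W2 y) ^ ε ≤ (ENNReal.ofReal (4 ^ n) * hlMax W x) ^ ε :=
      fun y hy => ENNReal.rpow_le_rpow (CR.far_bound W cc x hρ hx hy) hε0.le
    calc V⁻¹ * ∫⁻ y in ball cc ρ, (hlMax W2 y) ^ ε
        ≤ V⁻¹ * ∫⁻ _ in ball cc ρ, (ENNReal.ofReal (4 ^ n) * hlMax W x) ^ ε :=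
          mul_le_mul_right (setLIntegral_mono' measurableSet_ball hb) _
      _ = V⁻¹ * ((ENNReal.ofReal (4 ^ n) * hlMax W x) ^ ε * V) := by rw [setLIntegral_const]
      _ = (ENNReal.ofReal (4 ^ n) * hlMax W x) ^ ε * (V⁻¹ * V) := by ring
      _ = (ENNReal.ofReal (4 ^ n) * hlMax W x) ^ ε := by
          rw [ENNReal.inv_mul_cancel hV0 hVtop, mul_one]
      _ = ENNReal.ofReal (4 ^ n) ^ ε * (hlMax W x) ^ ε :=
          ENNReal.mul_rpow_of_nonneg _ _ hε0.le
  calc ballAvg (fun y => hlMax W y ^ ε) cc ρ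
      ≤ V⁻¹ * ∫⁻ y in ball cc ρ, ((hlMax W1 y) ^ ε + (hlMax W2 y) ^ ε) :=
        mul_le_mul_right (lintegral_mono hsplitpt) _
    _ = (V⁻¹ * ∫⁻ y in ball cc ρ, (hlMax W1 y) ^ ε)
        + (V⁻¹ * ∫⁻ y in ball cc ρ, (hlMax W2 y) ^ ε) := by
        rw [lintegral_add_left ((CR.measurable_hlMax W1).pow_const ε), mul_add]
    _ ≤ K * ENNReal.ofReal (3 ^ n) ^ ε * (hlMax W x) ^ ε
        + ENNReal.ofReal (4 ^ n) ^ ε * (hlMax W x) ^ ε := add_le_add hterm1 hterm2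
    _ = Ctot * (hlMax W x) ^ ε := by rw [hCdef]; ring
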